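/- arXiv:1501.07181 — 2 statements merged into one kernel-verified Lean document; each statement's English description precedes it below -/
import Mathlib

section
/- Let h ≥ 1, let Ω ⊂ ℝⁿ be a bounded open set and T > 0. A continuous function u on Ω̄ × [0,T) is a past parabolic viscosity h-infinite solution of u_t − Δ^h_∞u = 0 in Ω_T if and only if it is a parabolic viscosity h-infinite solution of u_t − Δ^h_∞u = 0 in Ω_T. -/
open scoped RealInnerProductSpace
open Filter Topology Asymptotics

noncomputable section

/-- Euclidean n-space, viewed as the abelian Carnot group. -/
abbrev Euc (n : ℕ) := EuclideanSpace ℝ (Fin n)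

variable {n : ℕ}

/-- Time derivative ∂ₜφ of a function of space and time. -/
def tderiv (φ : Euc n → ℝ → ℝ) (x : Euc n) (t : ℝ) : ℝ := deriv (φ x) t

/-- Spatial gradient ∇φ of a function of space and time. -/
def sgrad (φ : Euc n → ℝ → ℝ) (x : Euc n) (t : ℝ) : Euc n :=
  gradient (fun y => φ y t) x

/-- Spatial Hessian D²φ of a function of space and time, as a continuous linear map. -/
def sHess (φ : Euc n → ℝ → ℝ) (x : Euc n) (t : ℝ) : Euc n →L[ℝ] Euc n :=
  fderiv ℝ (fun y => sgrad φ y t) x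

/-- φ is C¹ in time and C² in space near (x₀,t₀): the time derivative and the spatial
derivatives up to order two exist near (x₀,t₀) and are (jointly) continuous there. -/
def ParabolicC2 (φ : Euc n → ℝ → ℝ) (x₀ : Euc n) (t₀ : ℝ) : Prop :=
  ∃ U ∈ 𝓝 ((x₀, t₀) : Euc n × ℝ),
    (∀ p ∈ U, DifferentiableAt ℝ (φ p.1) p.2) ∧
    (∀ p ∈ U, ContDiffAt ℝ 2 (fun y => φ y p.2) p.1) ∧
    ContinuousOn (fun p : Euc n × ℝ => φ p.1 p.2) U ∧
    ContinuousOn (fun p : Euc n × ℝ => tderiv φ p.1 p.2) U ∧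
    ContinuousOn (fun p : Euc n × ℝ => sgrad φ p.1 p.2) U ∧
    ContinuousOn (fun p : Euc n × ℝ => sHess φ p.1 p.2) U

/-- The h-homogeneous infinite Laplacian Δ^h_∞φ = ‖∇φ‖^(h-3) ⟨D²φ ∇φ, ∇φ⟩ (spatial). -/
def hLap (h : ℝ) (φ : Euc n → ℝ → ℝ) (x : Euc n) (t : ℝ) : ℝ :=
  ‖sgrad φ x t‖ ^ (h - 3) * ⟪(sHess φ x t) (sgrad φ x t), sgrad φ x t⟫

/-- max_{‖η‖=1} ⟨A η, η⟩. -/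
def qMax (A : Euc n →L[ℝ] Euc n) : ℝ :=
  sSup {r : ℝ | ∃ η : Euc n, ‖η‖ = 1 ∧ r = ⟪A η, η⟫}

/-- min_{‖η‖=1} ⟨A η, η⟩. -/
def qMin (A : Euc n →L[ℝ] Euc n) : ℝ :=
  sInf {r : ℝ | ∃ η : Euc n, ‖η‖ = 1 ∧ r = ⟪A η, η⟫}

/-- φ is a test function touching u from above at (x₀,t₀), relative to the domain Q:
φ is C¹ in t, C² in x near (x₀,t₀) and u - φ has a local maximum equal to 0 at (x₀,t₀). -/
def TAbove (Q : Set (Euc n × ℝ)) (u φ : Euc n → ℝ → ℝ) (x₀ : Euc n) (t₀ : ℝ) : Prop :=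
  ParabolicC2 φ x₀ t₀ ∧ u x₀ t₀ = φ x₀ t₀ ∧
    ∀ᶠ p in 𝓝 ((x₀, t₀) : Euc n × ℝ), p ∈ Q → u p.1 p.2 ≤ φ p.1 p.2

/-- φ is a test function touching u from below at (x₀,t₀), relative to the domain Q. -/
def TBelow (Q : Set (Euc n × ℝ)) (u φ : Euc n → ℝ → ℝ) (x₀ : Euc n) (t₀ : ℝ) : Prop :=
  ParabolicC2 φ x₀ t₀ ∧ u x₀ t₀ = φ x₀ t₀ ∧
    ∀ᶠ p in 𝓝 ((x₀, t₀) : Euc n × ℝ), p ∈ Q → φ p.1 p.2 ≤ u p.1 p.2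

/-- Past test function touching u from above: u - φ ≤ 0 on a neighborhood of (x₀,t₀)
but only required for times t < t₀. -/
def TAbovePast (Q : Set (Euc n × ℝ)) (u φ : Euc n → ℝ → ℝ) (x₀ : Euc n) (t₀ : ℝ) : Prop :=
  ParabolicC2 φ x₀ t₀ ∧ u x₀ t₀ = φ x₀ t₀ ∧
    ∀ᶠ p in 𝓝 ((x₀, t₀) : Euc n × ℝ), p ∈ Q → p.2 < t₀ → u p.1 p.2 ≤ φ p.1 p.2

/-- Past test function touching u from below. -/
def TBelowPast (Q : Set (Euc n × ℝ)) (u φ : Euc n → ℝ → ℝ) (x₀ : Euc n) (t₀ : ℝ) : Prop :=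
  ParabolicC2 φ x₀ t₀ ∧ u x₀ t₀ = φ x₀ t₀ ∧
    ∀ᶠ p in 𝓝 ((x₀, t₀) : Euc n × ℝ), p ∈ Q → p.2 < t₀ → φ p.1 p.2 ≤ u p.1 p.2

/-- The subsolution inequalities that a test function must satisfy at a touching point,
for the equation u_t − Δ^h_∞ u = 0. -/
def SubCond (h : ℝ) (φ : Euc n → ℝ → ℝ) (x₀ : Euc n) (t₀ : ℝ) : Prop :=
  (sgrad φ x₀ t₀ ≠ 0 → tderiv φ x₀ t₀ - hLap h φ x₀ t₀ ≤ 0) ∧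
  (sgrad φ x₀ t₀ = 0 → h = 1 → tderiv φ x₀ t₀ - qMax (sHess φ x₀ t₀) ≤ 0) ∧
  (sgrad φ x₀ t₀ = 0 → 1 < h → tderiv φ x₀ t₀ ≤ 0)

/-- The supersolution inequalities at a touching point. -/
def SuperCond (h : ℝ) (φ : Euc n → ℝ → ℝ) (x₀ : Euc n) (t₀ : ℝ) : Prop :=
  (sgrad φ x₀ t₀ ≠ 0 → 0 ≤ tderiv φ x₀ t₀ - hLap h φ x₀ t₀) ∧
  (sgrad φ x₀ t₀ = 0 → h = 1 → 0 ≤ tderiv φ x₀ t₀ - qMin (sHess φ x₀ t₀)) ∧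
  (sgrad φ x₀ t₀ = 0 → 1 < h → 0 ≤ tderiv φ x₀ t₀)

/-- Parabolic viscosity h-infinite subsolution of u_t − Δ^h_∞u = 0 on Q. -/
def IsParaSub (h : ℝ) (Q : Set (Euc n × ℝ)) (u : Euc n → ℝ → ℝ) : Prop :=
  UpperSemicontinuousOn (fun p : Euc n × ℝ => u p.1 p.2) Q ∧
  ∀ x₀ t₀, (x₀, t₀) ∈ Q → ∀ φ, TAbove Q u φ x₀ t₀ → SubCond h φ x₀ t₀

/-- Parabolic viscosity h-infinite supersolution of u_t − Δ^h_∞u = 0 on Q. -/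
def IsParaSuper (h : ℝ) (Q : Set (Euc n × ℝ)) (u : Euc n → ℝ → ℝ) : Prop :=
  LowerSemicontinuousOn (fun p : Euc n × ℝ => u p.1 p.2) Q ∧
  ∀ x₀ t₀, (x₀, t₀) ∈ Q → ∀ φ, TBelow Q u φ x₀ t₀ → SuperCond h φ x₀ t₀

/-- Past parabolic viscosity h-infinite subsolution. -/
def IsPastParaSub (h : ℝ) (Q : Set (Euc n × ℝ)) (u : Euc n → ℝ → ℝ) : Prop :=
  UpperSemicontinuousOn (fun p : Euc n × ℝ => u p.1 p.2) Q ∧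
  ∀ x₀ t₀, (x₀, t₀) ∈ Q → ∀ φ, TAbovePast Q u φ x₀ t₀ → SubCond h φ x₀ t₀

/-- Past parabolic viscosity h-infinite supersolution. -/
def IsPastParaSuper (h : ℝ) (Q : Set (Euc n × ℝ)) (u : Euc n → ℝ → ℝ) : Prop :=
  LowerSemicontinuousOn (fun p : Euc n × ℝ => u p.1 p.2) Q ∧
  ∀ x₀ t₀, (x₀, t₀) ∈ Q → ∀ φ, TBelowPast Q u φ x₀ t₀ → SuperCond h φ x₀ t₀

/-- Parabolic viscosity subsolution of u_t + F(t,x,u,∇u,D²u) = 0 on Q, for a general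
operator F. -/
def IsParaSubF (F : ℝ → Euc n → ℝ → Euc n → (Euc n →L[ℝ] Euc n) → ℝ)
    (Q : Set (Euc n × ℝ)) (u : Euc n → ℝ → ℝ) : Prop :=
  UpperSemicontinuousOn (fun p : Euc n × ℝ => u p.1 p.2) Q ∧
  ∀ x₀ t₀, (x₀, t₀) ∈ Q → ∀ φ, TAbove Q u φ x₀ t₀ →
    tderiv φ x₀ t₀ + F t₀ x₀ (u x₀ t₀) (sgrad φ x₀ t₀) (sHess φ x₀ t₀) ≤ 0

/-- Parabolic viscosity supersolution of u_t + F(t,x,u,∇u,D²u) = 0 on Q. -/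
def IsParaSuperF (F : ℝ → Euc n → ℝ → Euc n → (Euc n →L[ℝ] Euc n) → ℝ)
    (Q : Set (Euc n × ℝ)) (u : Euc n → ℝ → ℝ) : Prop :=
  LowerSemicontinuousOn (fun p : Euc n × ℝ => u p.1 p.2) Q ∧
  ∀ x₀ t₀, (x₀, t₀) ∈ Q → ∀ φ, TBelow Q u φ x₀ t₀ →
    0 ≤ tderiv φ x₀ t₀ + F t₀ x₀ (u x₀ t₀) (sgrad φ x₀ t₀) (sHess φ x₀ t₀)

/-- F is proper: F(t,x,r,η,X) ≤ F(t,x,s,η,Y) whenever r ≤ s and Y ≤ X (Loewner order). -/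
def IsProperF (F : ℝ → Euc n → ℝ → Euc n → (Euc n →L[ℝ] Euc n) → ℝ) : Prop :=
  ∀ (t : ℝ) (x : Euc n) (r s : ℝ) (η : Euc n) (X Y : Euc n →L[ℝ] Euc n),
    r ≤ s → (∀ v : Euc n, ⟪Y v, v⟫ ≤ ⟪X v, v⟫) → F t x r η X ≤ F t x s η Y

/-- The lower semicontinuous envelope of u relative to Q:
u_*(x,t) = lim_{r↓0} inf { u(y,s) : (y,s) ∈ Q, |y−x| + |s−t| ≤ r }. -/
def lscEnvOn (Q : Set (Euc n × ℝ)) (u : Euc n → ℝ → ℝ) (x : Euc n) (t : ℝ) : ℝ :=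
  ⨆ r : {r : ℝ // 0 < r},
    sInf ((fun p : Euc n × ℝ => u p.1 p.2) '' {p ∈ Q | ‖p.1 - x‖ + |p.2 - t| ≤ r.1})

/-- The upper semicontinuous envelope of u relative to Q. -/
def uscEnvOn (Q : Set (Euc n × ℝ)) (u : Euc n → ℝ → ℝ) (x : Euc n) (t : ℝ) : ℝ :=
  ⨅ r : {r : ℝ // 0 < r},
    sSup ((fun p : Euc n × ℝ => u p.1 p.2) '' {p ∈ Q | ‖p.1 - x‖ + |p.2 - t| ≤ r.1})

/-- Hessian of a function of space only. -/
def eHess (φ : Euc n → ℝ) (x : Euc n) : Euc n →L[ℝ] Euc n :=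
  fderiv ℝ (gradient φ) x

/-- The stationary h-homogeneous infinite Laplacian. -/
def eLap (h : ℝ) (φ : Euc n → ℝ) (x : Euc n) : ℝ :=
  ‖gradient φ x‖ ^ (h - 3) * ⟪(eHess φ x) (gradient φ x), gradient φ x⟫

/-- C² test function touching u from above at x₀, relative to Ω. -/
def ETAbove (Ω : Set (Euc n)) (u φ : Euc n → ℝ) (x₀ : Euc n) : Prop :=
  ContDiffAt ℝ 2 φ x₀ ∧ u x₀ = φ x₀ ∧ ∀ᶠ x in 𝓝 x₀, x ∈ Ω → u x ≤ φ x

/-- C² test function touching u from below at x₀, relative to Ω. -/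
def ETBelow (Ω : Set (Euc n)) (u φ : Euc n → ℝ) (x₀ : Euc n) : Prop :=
  ContDiffAt ℝ 2 φ x₀ ∧ u x₀ = φ x₀ ∧ ∀ᶠ x in 𝓝 x₀, x ∈ Ω → φ x ≤ u x

/-- Viscosity subsolution of −Δ^h_∞u = 0 in Ω. -/
def IsEllSub (h : ℝ) (Ω : Set (Euc n)) (u : Euc n → ℝ) : Prop :=
  UpperSemicontinuousOn u Ω ∧
  ∀ x₀ ∈ Ω, ∀ φ, ETAbove Ω u φ x₀ → gradient φ x₀ ≠ 0 → 0 ≤ eLap h φ x₀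

/-- Viscosity supersolution of −Δ^h_∞u = 0 in Ω. -/
def IsEllSuper (h : ℝ) (Ω : Set (Euc n)) (u : Euc n → ℝ) : Prop :=
  LowerSemicontinuousOn u Ω ∧
  ∀ x₀ ∈ Ω, ∀ φ, ETBelow Ω u φ x₀ → gradient φ x₀ ≠ 0 → eLap h φ x₀ ≤ 0
set_option synthInstance.maxHeartbeats 1000000
set_option maxHeartbeats 1000000

section Aux
variable {n : ℕ}

lemma tderiv_neg (φ : Euc n → ℝ → ℝ) (x : Euc n) (t : ℝ) :
    tderiv (fun x t => -(φ x t)) x t = -tderiv φ x t := by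
  simp [tderiv, deriv.neg]

lemma gradient_neg' (f : Euc n → ℝ) (x : Euc n) :
    gradient (fun y => -(f y)) x = -gradient f x := by
  simp only [gradient]
  rw [fderiv_fun_neg, map_neg]

lemma sgrad_neg (φ : Euc n → ℝ → ℝ) (x : Euc n) (t : ℝ) :
    sgrad (fun x t => -(φ x t)) x t = -sgrad φ x t := by
  simp [sgrad, gradient_neg']

lemma sHess_neg (φ : Euc n → ℝ → ℝ) (x : Euc n) (t : ℝ) :
    sHess (fun x t => -(φ x t)) x t = -sHess φ x t := by
  have : (fun y => sgrad (fun x t => -(φ x t)) y t) = fun y => -(sgrad φ y t) := by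
    funext y; exact sgrad_neg φ y t
  rw [sHess, this, fderiv_fun_neg, sHess]

lemma qMin_eq_neg_qMax (A : Euc n →L[ℝ] Euc n) : qMin A = -qMax (-A) := by
  rw [qMin, Real.sInf_def]
  congr 1
  rw [qMax]
  congr 1
  ext r
  simp only [Set.mem_neg, Set.mem_setOf_eq]
  constructor
  · rintro ⟨η, hη, hr⟩
    refine ⟨η, hη, ?_⟩
    have : r = -(inner ℝ (A η) η : ℝ) := by linarith [hr]
    rw [this]; simp
  · rintro ⟨η, hη, hr⟩
    exact ⟨η, hη, by rw [hr]; simp⟩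

end Aux
section Aux2
variable {n : ℕ}

lemma ParabolicC2.neg {φ : Euc n → ℝ → ℝ} {x₀ : Euc n} {t₀ : ℝ}
    (h : ParabolicC2 φ x₀ t₀) : ParabolicC2 (fun x t => -(φ x t)) x₀ t₀ := by
  obtain ⟨U, hU, h1, h2, h3, h4, h5, h6⟩ := h
  refine ⟨U, hU, fun p hp => ((h1 p hp).neg), fun p hp => ((h2 p hp).neg),
    h3.neg, ?_, ?_, ?_⟩
  · have : ∀ p ∈ U, tderiv (fun x t => -(φ x t)) p.1 p.2 = -(tderiv φ p.1 p.2) :=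
      fun p _ => tderiv_neg φ p.1 p.2
    exact (h4.neg).congr fun p hp => (this p hp)
  · have : ∀ p ∈ U, sgrad (fun x t => -(φ x t)) p.1 p.2 = -(sgrad φ p.1 p.2) :=
      fun p _ => sgrad_neg φ p.1 p.2
    exact (h5.neg).congr fun p hp => (this p hp)
  · have : ∀ p ∈ U, sHess (fun x t => -(φ x t)) p.1 p.2 = -(sHess φ p.1 p.2) :=
      fun p _ => sHess_neg φ p.1 p.2
    exact (h6.neg).congr fun p hp => (this p hp)

lemma hLap_neg (h : ℝ) (φ : Euc n → ℝ → ℝ) (x : Euc n) (t : ℝ) :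
    hLap h (fun x t => -(φ x t)) x t = -hLap h φ x t := by
  simp only [hLap, sgrad_neg, sHess_neg, norm_neg]
  have : (inner ℝ ((-sHess φ x t) (-sgrad φ x t)) (-sgrad φ x t) : ℝ)
      = -(inner ℝ ((sHess φ x t) (sgrad φ x t)) (sgrad φ x t) : ℝ) := by
    rw [ContinuousLinearMap.neg_apply, map_neg, neg_neg, inner_neg_right]
  rw [this, mul_neg]

lemma SubCond_neg_iff (h : ℝ) (φ : Euc n → ℝ → ℝ) (x₀ : Euc n) (t₀ : ℝ) :
    SubCond h (fun x t => -(φ x t)) x₀ t₀ ↔ SuperCond h φ x₀ t₀ := by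
  simp only [SubCond, SuperCond, sgrad_neg, tderiv_neg, hLap_neg, sHess_neg, neg_eq_zero,
    neg_ne_zero, qMin_eq_neg_qMax]
  constructor
  · rintro ⟨a, b, c⟩
    exact ⟨fun hg => by linarith [a hg], fun hg hh => by linarith [b hg hh],
      fun hg hh => by linarith [c hg hh]⟩
  · rintro ⟨a, b, c⟩
    exact ⟨fun hg => by linarith [a hg], fun hg hh => by linarith [b hg hh],
      fun hg hh => by linarith [c hg hh]⟩

end Aux2
section Aux3
variable {n : ℕ}

lemma lsc_neg {f : Euc n × ℝ → ℝ} {Q : Set (Euc n × ℝ)}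
    (h : LowerSemicontinuousOn f Q) : UpperSemicontinuousOn (fun p => -(f p)) Q := by
  intro x hx y hy
  have : -y < f x := by simpa using neg_lt_neg hy
  filter_upwards [h x hx (-y) this] with p hp
  simpa using neg_lt_neg hp

lemma neg_neg_fun (φ : Euc n → ℝ → ℝ) : (fun x t => -(-(φ x t))) = φ := by
  funext x t; ring

lemma IsParaSuper.neg_sub {h : ℝ} {Q : Set (Euc n × ℝ)} {u : Euc n → ℝ → ℝ}
    (hs : IsParaSuper h Q u) : IsParaSub h Q (fun x t => -(u x t)) := by
  obtain ⟨hlsc, hs⟩ := hs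
  refine ⟨lsc_neg hlsc, fun x₀ t₀ hz φ hφ => ?_⟩
  obtain ⟨hC2, heq, hev⟩ := hφ
  have hb : TBelow Q u (fun x t => -(φ x t)) x₀ t₀ := by
    refine ⟨hC2.neg, by dsimp only at heq ⊢; linarith, ?_⟩
    filter_upwards [hev] with p hp hpQ
    have h2 := hp hpQ; show -(φ p.1 p.2) ≤ u p.1 p.2; linarith
  have := hs x₀ t₀ hz _ hb
  rw [← SubCond_neg_iff] at this
  rwa [neg_neg_fun] at this

lemma IsPastParaSub.neg_super {h : ℝ} {Q : Set (Euc n × ℝ)} {u : Euc n → ℝ → ℝ}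
    (hlsc : LowerSemicontinuousOn (fun p : Euc n × ℝ => u p.1 p.2) Q)
    (hs : IsPastParaSub h Q (fun x t => -(u x t))) : IsPastParaSuper h Q u := by
  obtain ⟨_, hs⟩ := hs
  refine ⟨hlsc, fun x₀ t₀ hz φ hφ => ?_⟩
  obtain ⟨hC2, heq, hev⟩ := hφ
  have ha : TAbovePast Q (fun x t => -(u x t)) (fun x t => -(φ x t)) x₀ t₀ := by
    refine ⟨hC2.neg, by dsimp only at heq ⊢; linarith, ?_⟩
    filter_upwards [hev] with p hp hpQ hpt
    have h2 := hp hpQ hpt; show -(u p.1 p.2) ≤ -(φ p.1 p.2); linarith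
  have := hs x₀ t₀ hz _ ha
  rwa [SubCond_neg_iff] at this

/-- trivial direction : a past subsolution is a subsolution -/
lemma IsPastParaSub.toSub {h : ℝ} {Q : Set (Euc n × ℝ)} {u : Euc n → ℝ → ℝ}
    (hs : IsPastParaSub h Q u) : IsParaSub h Q u := by
  obtain ⟨husc, hs⟩ := hs
  refine ⟨husc, fun x₀ t₀ hz φ hφ => ?_⟩
  obtain ⟨hC2, heq, hev⟩ := hφ
  exact hs x₀ t₀ hz φ ⟨hC2, heq, by filter_upwards [hev] with p hp hpQ _; exact hp hpQ⟩

lemma IsPastParaSuper.toSuper {h : ℝ} {Q : Set (Euc n × ℝ)} {u : Euc n → ℝ → ℝ}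
    (hs : IsPastParaSuper h Q u) : IsParaSuper h Q u := by
  obtain ⟨hlsc, hs⟩ := hs
  refine ⟨hlsc, fun x₀ t₀ hz φ hφ => ?_⟩
  obtain ⟨hC2, heq, hev⟩ := hφ
  exact hs x₀ t₀ hz φ ⟨hC2, heq, by filter_upwards [hev] with p hp hpQ _; exact hp hpQ⟩

end Aux3
section Aux4
variable {n : ℕ}

lemma qSet_bddAbove (A : Euc n →L[ℝ] Euc n) :
    BddAbove {r : ℝ | ∃ η : Euc n, ‖η‖ = 1 ∧ r = ⟪A η, η⟫} := by
  refine ⟨‖A‖, fun r hr => ?_⟩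
  obtain ⟨η, hη, rfl⟩ := hr
  calc (⟪A η, η⟫ : ℝ) ≤ ‖A η‖ * ‖η‖ := real_inner_le_norm _ _
    _ ≤ ‖A‖ * ‖η‖ * ‖η‖ := by
        have := A.le_opNorm η
        nlinarith [norm_nonneg (A η), norm_nonneg η]
    _ = ‖A‖ := by rw [hη]; ring

lemma inner_le_qMax (A : Euc n →L[ℝ] Euc n) {η : Euc n} (hη : ‖η‖ = 1) :
    (⟪A η, η⟫ : ℝ) ≤ qMax A :=
  le_csSup (qSet_bddAbove A) ⟨η, hη, rfl⟩

lemma qMax_le_add (A B : Euc n →L[ℝ] Euc n) : qMax B ≤ qMax A + ‖B - A‖ := by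
  rcases Set.eq_empty_or_nonempty {r : ℝ | ∃ η : Euc n, ‖η‖ = 1 ∧ r = ⟪B η, η⟫} with he | hne
  · have he' : {r : ℝ | ∃ η : Euc n, ‖η‖ = 1 ∧ r = ⟪A η, η⟫} = ∅ := by
      rw [Set.eq_empty_iff_forall_notMem] at he ⊢
      rintro r ⟨η, hη, _⟩
      exact he (⟪B η, η⟫ : ℝ) ⟨η, hη, rfl⟩
    rw [qMax, qMax, he, he', Real.sSup_empty]
    positivity
  · rw [qMax]
    apply csSup_le hne
    rintro r ⟨η, hη, rfl⟩
    have h1 : (⟪B η, η⟫ : ℝ) = ⟪A η, η⟫ + ⟪(B - A) η, η⟫ := by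
      rw [ContinuousLinearMap.sub_apply, inner_sub_left]; ring
    have h2 : (⟪(B - A) η, η⟫ : ℝ) ≤ ‖B - A‖ := by
      calc (⟪(B - A) η, η⟫ : ℝ) ≤ ‖(B - A) η‖ * ‖η‖ := real_inner_le_norm _ _
        _ ≤ ‖B - A‖ * ‖η‖ * ‖η‖ := by
            have := (B - A).le_opNorm η
            nlinarith [norm_nonneg ((B - A) η), norm_nonneg η]
        _ = ‖B - A‖ := by rw [hη]; ring
    have h3 := inner_le_qMax A hη
    linarith

end Aux4
section Aux5
variable {n : ℕ}

/-- the quartic penalty -/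
def quart (x₀ : Euc n) (y : Euc n) : ℝ := (⟪y - x₀, y - x₀⟫ : ℝ)^2

/-- its gradient field -/
def quartG (x₀ : Euc n) (y : Euc n) : Euc n := (4 * (⟪y - x₀, y - x₀⟫ : ℝ)) • (y - x₀)

lemma quart_nonneg (x₀ y : Euc n) : 0 ≤ quart x₀ y := sq_nonneg _

lemma quart_zero (x₀ : Euc n) : quart x₀ x₀ = 0 := by simp [quart]

lemma quart_eq_zero {x₀ y : Euc n} (h : quart x₀ y ≤ 0) : y = x₀ := by
  have h1 : (⟪y - x₀, y - x₀⟫ : ℝ) = 0 := by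
    have := sq_nonneg (⟪y - x₀, y - x₀⟫ : ℝ)
    have := pow_eq_zero_iff (n := 2) (by norm_num) |>.mp (le_antisymm h (quart_nonneg x₀ y))
    exact this
  have := inner_self_eq_zero (𝕜 := ℝ).mp h1
  rwa [sub_eq_zero] at this

lemma hasGradientAt_quart (x₀ y : Euc n) :
    HasGradientAt (quart x₀) (quartG x₀ y) y := by
  have hsub : HasFDerivAt (fun y : Euc n => y - x₀) (ContinuousLinearMap.id ℝ (Euc n)) y :=
    (hasFDerivAt_id y).sub_const x₀
  have hinner := hsub.inner (𝕜 := ℝ) hsub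
  have hsq := hinner.fun_mul hinner
  rw [hasGradientAt_iff_hasFDerivAt]
  have hq : quart x₀ = fun y : Euc n => (⟪y - x₀, y - x₀⟫ : ℝ) * ⟪y - x₀, y - x₀⟫ := by
    funext y; rw [quart, sq]
  rw [hq]
  convert hsq using 1
  · rfl
  ext v
  simp only [ContinuousLinearMap.add_apply, ContinuousLinearMap.coe_smul', Pi.smul_apply,
    ContinuousLinearMap.coe_comp', Function.comp_apply, ContinuousLinearMap.prod_apply,
    ContinuousLinearMap.coe_id', id_eq, fderivInnerCLM_apply, InnerProductSpace.toDual_apply_apply,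
    quartG, real_inner_smul_left, smul_eq_mul]
  rw [real_inner_comm v (y - x₀)]
  ring

lemma contDiff_quartG (x₀ : Euc n) : ContDiff ℝ ⊤ (quartG x₀) := by
  have h1 : ContDiff ℝ ⊤ (fun y : Euc n => y - x₀) := contDiff_id.sub contDiff_const
  have h2 : ContDiff ℝ ⊤ (fun y : Euc n => (⟪y - x₀, y - x₀⟫ : ℝ)) := ContDiff.inner (𝕜 := ℝ) h1 h1
  unfold quartG
  have h3 : ContDiff ℝ ⊤ (fun y : Euc n => 4 * (⟪y - x₀, y - x₀⟫ : ℝ)) := contDiff_const.mul h2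
  exact h3.smul h1

lemma hasFDerivAt_quartG_zero (x₀ : Euc n) :
    HasFDerivAt (quartG x₀) (0 : Euc n →L[ℝ] Euc n) x₀ := by
  rw [hasFDerivAt_iff_isLittleO_nhds_zero]
  rw [Asymptotics.isLittleO_iff]
  intro c hc
  have hev : ∀ᶠ v : Euc n in 𝓝 0, ‖v‖ ≤ Real.sqrt (c / 4) := by
    have h4 : (0:ℝ) < Real.sqrt (c / 4) := Real.sqrt_pos.mpr (by linarith)
    filter_upwards [Metric.closedBall_mem_nhds (0 : Euc n) h4] with v hv
    simpa using hv
  filter_upwards [hev] with v hv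
  have hvv : ‖v‖^2 ≤ c / 4 := by
    have := Real.sq_sqrt (by linarith : (0:ℝ) ≤ c / 4)
    nlinarith [norm_nonneg v]
  have h1 : quartG x₀ (x₀ + v) = (4 * ‖v‖^2) • v := by
    rw [quartG, add_sub_cancel_left, real_inner_self_eq_norm_sq]
  have h0 : quartG x₀ x₀ = 0 := by simp [quartG]
  rw [h1, h0, sub_zero, ContinuousLinearMap.zero_apply, sub_zero, norm_smul,
    Real.norm_eq_abs, abs_of_nonneg (by positivity)]
  nlinarith [norm_nonneg v]

end Aux5
section Aux6
variable {n : ℕ}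

lemma HasGradientAt.add' {f g : Euc n → ℝ} {a b x : Euc n}
    (hf : HasGradientAt f a x) (hg : HasGradientAt g b x) :
    HasGradientAt (fun y => f y + g y) (a + b) x := by
  rw [hasGradientAt_iff_hasFDerivAt] at hf hg ⊢
  simpa [map_add] using hf.fun_add hg

lemma contDiff_quart (x₀ : Euc n) : ContDiff ℝ ⊤ (quart x₀) := by
  have h1 : ContDiff ℝ ⊤ (fun y : Euc n => y - x₀) := contDiff_id.sub contDiff_const
  have h2 : ContDiff ℝ ⊤ (fun y : Euc n => (⟪y - x₀, y - x₀⟫ : ℝ)) :=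
    ContDiff.inner (𝕜 := ℝ) h1 h1
  exact h2.pow 2

lemma continuous_quartG_fderiv (x₀ : Euc n) :
    Continuous (fun y : Euc n => fderiv ℝ (quartG x₀) y) :=
  (contDiff_quartG x₀).continuous_fderiv (by simp)

/-- the perturbed test function -/
def psiF (φ : Euc n → ℝ → ℝ) (x₀ : Euc n) (t₀ c M : ℝ) : Euc n → ℝ → ℝ :=
  fun x t => φ x t + quart x₀ x + (c * (t - t₀)^2 + M)

lemma hasDerivAt_timePart (t₀ c M : ℝ) (t : ℝ) :
    HasDerivAt (fun s : ℝ => c * (s - t₀)^2 + M) (2 * c * (t - t₀)) t := by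
  have h : HasDerivAt (fun s : ℝ => (s - t₀)^2) (2 * (t - t₀)) t := by
    simpa using ((hasDerivAt_id t).sub_const t₀).fun_pow 2
  simpa [mul_comm, mul_assoc, mul_left_comm] using (h.const_mul c).add_const M

variable {φ : Euc n → ℝ → ℝ} {U : Set (Euc n × ℝ)} (x₀ : Euc n) (t₀ c M : ℝ)

lemma psi_tderiv (h1 : ∀ p ∈ U, DifferentiableAt ℝ (φ p.1) p.2) {p : Euc n × ℝ} (hp : p ∈ U) :
    tderiv (psiF φ x₀ t₀ c M) p.1 p.2 = tderiv φ p.1 p.2 + 2 * c * (p.2 - t₀) := by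
  have hφ : HasDerivAt (φ p.1) (tderiv φ p.1 p.2) p.2 := (h1 p hp).hasDerivAt
  have H : HasDerivAt (psiF φ x₀ t₀ c M p.1)
      (tderiv φ p.1 p.2 + 2 * c * (p.2 - t₀)) p.2 := by
    have := (hφ.add_const (quart x₀ p.1)).add (hasDerivAt_timePart t₀ c M p.2)
    exact this
  exact H.deriv

lemma psi_sgrad (h2 : ∀ p ∈ U, ContDiffAt ℝ 2 (fun y => φ y p.2) p.1)
    {p : Euc n × ℝ} (hp : p ∈ U) :
    sgrad (psiF φ x₀ t₀ c M) p.1 p.2 = sgrad φ p.1 p.2 + quartG x₀ p.1 := by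
  have hφd : DifferentiableAt ℝ (fun y => φ y p.2) p.1 :=
    (h2 p hp).differentiableAt (by norm_num)
  have hφ : HasGradientAt (fun y => φ y p.2) (sgrad φ p.1 p.2) p.1 := hφd.hasGradientAt
  have hq : HasGradientAt (quart x₀) (quartG x₀ p.1) p.1 := hasGradientAt_quart x₀ p.1
  have H : HasGradientAt (fun y => psiF φ x₀ t₀ c M y p.2)
      (sgrad φ p.1 p.2 + quartG x₀ p.1 + 0) p.1 :=
    (hφ.add' hq).add' (hasGradientAt_const p.1 (c * (p.2 - t₀)^2 + M))
  rw [add_zero] at H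
  exact H.gradient

lemma diffAt_sgrad (h2 : ∀ p ∈ U, ContDiffAt ℝ 2 (fun y => φ y p.2) p.1)
    {p : Euc n × ℝ} (hp : p ∈ U) :
    DifferentiableAt ℝ (fun y => sgrad φ y p.2) p.1 := by
  have hf2 : ContDiffAt ℝ 1 (fderiv ℝ (fun y => φ y p.2)) p.1 :=
    (h2 p hp).fderiv_right (by norm_num)
  have hd : DifferentiableAt ℝ (fderiv ℝ (fun y => φ y p.2)) p.1 :=
    hf2.differentiableAt one_ne_zero
  have : (fun y => sgrad φ y p.2)
      = fun y => (InnerProductSpace.toDual ℝ (Euc n)).symm (fderiv ℝ (fun y => φ y p.2) y) :=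
    rfl
  rw [this]
  exact ((InnerProductSpace.toDual ℝ (Euc n)).symm.toContinuousLinearEquiv.differentiableAt).comp
    p.1 hd

lemma psi_sHess (hUo : IsOpen U)
    (h2 : ∀ p ∈ U, ContDiffAt ℝ 2 (fun y => φ y p.2) p.1)
    {p : Euc n × ℝ} (hp : p ∈ U) :
    sHess (psiF φ x₀ t₀ c M) p.1 p.2 = sHess φ p.1 p.2 + fderiv ℝ (quartG x₀) p.1 := by
  have hev : (fun y => sgrad (psiF φ x₀ t₀ c M) y p.2)
      =ᶠ[𝓝 p.1] fun y => sgrad φ y p.2 + quartG x₀ y := by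
    have hUs : IsOpen {y : Euc n | (y, p.2) ∈ U} := hUo.preimage (by continuity)
    have hps : p.1 ∈ {y : Euc n | (y, p.2) ∈ U} := hp
    filter_upwards [hUs.mem_nhds hps] with y hy
    exact psi_sgrad x₀ t₀ c M h2 (p := (y, p.2)) hy
  have hφd : DifferentiableAt ℝ (fun y => sgrad φ y p.2) p.1 := diffAt_sgrad h2 hp
  have hGd : DifferentiableAt ℝ (quartG x₀) p.1 :=
    ((contDiff_quartG x₀).differentiable (by simp)).differentiableAt
  rw [sHess, hev.fderiv_eq, fderiv_fun_add hφd hGd, sHess]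

end Aux6
section Aux7
variable {n : ℕ} {φ : Euc n → ℝ → ℝ} {U : Set (Euc n × ℝ)}

lemma psi_parab (x₀ : Euc n) (t₀ c M : ℝ) (hUo : IsOpen U)
    (h1 : ∀ p ∈ U, DifferentiableAt ℝ (φ p.1) p.2)
    (h2 : ∀ p ∈ U, ContDiffAt ℝ 2 (fun y => φ y p.2) p.1)
    (h3 : ContinuousOn (fun p : Euc n × ℝ => φ p.1 p.2) U)
    (h4 : ContinuousOn (fun p : Euc n × ℝ => tderiv φ p.1 p.2) U)
    (h5 : ContinuousOn (fun p : Euc n × ℝ => sgrad φ p.1 p.2) U)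
    (h6 : ContinuousOn (fun p : Euc n × ℝ => sHess φ p.1 p.2) U)
    {p : Euc n × ℝ} (hp : p ∈ U) :
    ParabolicC2 (psiF φ x₀ t₀ c M) p.1 p.2 := by
  have hq4 : Continuous (fun q : Euc n × ℝ => quart x₀ q.1) :=
    (contDiff_quart x₀).continuous.comp continuous_fst
  have htc : Continuous (fun q : Euc n × ℝ => c * (q.2 - t₀)^2 + M) := by fun_prop
  have ht2 : Continuous (fun q : Euc n × ℝ => 2 * c * (q.2 - t₀)) := by fun_prop
  refine ⟨U, hUo.mem_nhds hp, ?_, ?_, ?_, ?_, ?_, ?_⟩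
  · intro q hq
    exact ((h1 q hq).add_const (quart x₀ q.1)).add
      (hasDerivAt_timePart t₀ c M q.2).differentiableAt
  · intro q hq
    exact ((h2 q hq).add ((contDiff_quart x₀).of_le le_top).contDiffAt).add contDiffAt_const
  · exact (h3.add hq4.continuousOn).add htc.continuousOn
  · refine ContinuousOn.congr (h4.add ht2.continuousOn) ?_
    intro q hq
    exact psi_tderiv x₀ t₀ c M h1 hq
  · refine ContinuousOn.congr
      (h5.add (((contDiff_quartG x₀).continuous.comp continuous_fst).continuousOn)) ?_
    intro q hq
    exact psi_sgrad x₀ t₀ c M h2 hq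
  · refine ContinuousOn.congr
      (h6.add (((continuous_quartG_fderiv x₀).comp continuous_fst).continuousOn)) ?_
    intro q hq
    exact psi_sHess x₀ t₀ c M hUo h2 hq

end Aux7
section Core
variable {n : ℕ}

lemma core {h : ℝ} (hh : 1 ≤ h) {Q : Set (Euc n × ℝ)} (hQ : IsOpen Q)
    {u : Euc n → ℝ → ℝ} (hu : ContinuousOn (fun p : Euc n × ℝ => u p.1 p.2) Q)
    (hsub : IsParaSub h Q u) : IsPastParaSub h Q u := by
  classical
  obtain ⟨husc, hsub⟩ := hsub
  refine ⟨husc, fun x₀ t₀ hz φ hφ => ?_⟩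
  obtain ⟨hC2, heq, hev⟩ := hφ
  obtain ⟨U₀, hU₀, Q1, Q2, Q3, Q4, Q5, Q6⟩ := hC2
  set U : Set (Euc n × ℝ) := interior U₀ with hUdef
  have hUo : IsOpen U := isOpen_interior
  have hUz : (x₀, t₀) ∈ U := mem_interior_iff_mem_nhds.mpr hU₀
  have P1 : ∀ p ∈ U, DifferentiableAt ℝ (φ p.1) p.2 := fun p hp => Q1 p (interior_subset hp)
  have P2 : ∀ p ∈ U, ContDiffAt ℝ 2 (fun y => φ y p.2) p.1 := fun p hp =>
    Q2 p (interior_subset hp)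
  have P3 : ContinuousOn (fun p : Euc n × ℝ => φ p.1 p.2) U := Q3.mono interior_subset
  have P4 : ContinuousOn (fun p : Euc n × ℝ => tderiv φ p.1 p.2) U := Q4.mono interior_subset
  have P5 : ContinuousOn (fun p : Euc n × ℝ => sgrad φ p.1 p.2) U := Q5.mono interior_subset
  have P6 : ContinuousOn (fun p : Euc n × ℝ => sHess φ p.1 p.2) U := Q6.mono interior_subset
  obtain ⟨V, hV, hVev⟩ := hev.exists_mem
  have hmem : U ∩ (V ∩ Q) ∈ 𝓝 ((x₀, t₀) : Euc n × ℝ) :=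
    Filter.inter_mem (hUo.mem_nhds hUz) (Filter.inter_mem hV (hQ.mem_nhds hz))
  obtain ⟨r, hr, hK⟩ := (Metric.nhds_basis_closedBall.mem_iff).mp hmem
  set K : Set (Euc n × ℝ) := Metric.closedBall (x₀, t₀) r with hKdef
  have hKc : IsCompact K := isCompact_closedBall _ _
  have hKz : (x₀, t₀) ∈ K := Metric.mem_closedBall_self hr.le
  have hKU : K ⊆ U := fun p hp => (hK hp).1
  have hKV : K ⊆ V := fun p hp => (hK hp).2.1
  have hKQ : K ⊆ Q := fun p hp => (hK hp).2.2
  set F : Euc n × ℝ → ℝ := fun p => u p.1 p.2 - φ p.1 p.2 with hFdef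
  have hFc : ContinuousOn F K := (hu.mono hKQ).sub (P3.mono hKU)
  have hFz : F (x₀, t₀) = 0 := by simp [hFdef, heq]
  -- (F0) : past and present are below φ
  have hF0 : ∀ p ∈ K, p.2 ≤ t₀ → F p ≤ 0 := by
    intro p hp hpt
    rcases lt_or_eq_of_le hpt with hlt | heqt
    · have := hVev p (hKV hp) (hKQ hp) hlt
      simp only [hFdef]; linarith
    · -- p.2 = t₀ : approximate from the past
      have hseq : ∀ k : ℕ, (p.1, t₀ - r / (k + 1)) ∈ K := by
        intro k
        have hpK : dist p (x₀, t₀) ≤ r := Metric.mem_closedBall.mp hp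
        rw [Prod.dist_eq] at hpK
        have h1 : dist p.1 (x₀, t₀).1 ≤ r := le_trans (le_max_left _ _) hpK
        have hk : (0:ℝ) < (k:ℝ) + 1 := by positivity
        have hrk : 0 < r / ((k:ℝ)+1) := by positivity
        have hrk2 : r / ((k:ℝ)+1) ≤ r := by
          rw [div_le_iff₀ hk]; nlinarith
        have h2 : dist (t₀ - r / ((k:ℝ) + 1)) t₀ ≤ r := by
          rw [Real.dist_eq, abs_of_nonpos (by linarith)]
          linarith
        refine Metric.mem_closedBall.mpr ?_
        rw [Prod.dist_eq]
        exact max_le h1 h2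
      have hlt' : ∀ k : ℕ, F (p.1, t₀ - r / (k + 1)) ≤ 0 := by
        intro k
        have hkpos : (0:ℝ) < r / (k+1) := by positivity
        have := hVev _ (hKV (hseq k)) (hKQ (hseq k)) (by simp only; linarith)
        simp only [hFdef]; linarith
      have htend : Filter.Tendsto (fun k : ℕ => ((p.1, t₀ - r / (k + 1)) : Euc n × ℝ))
          atTop (𝓝[K] p) := by
        rw [tendsto_nhdsWithin_iff]
        constructor
        · have hd : Filter.Tendsto (fun k : ℕ => r / ((k:ℝ) + 1)) atTop (𝓝 0) := by
            have h0 : Filter.Tendsto (fun k : ℕ => r / (k:ℝ)) atTop (𝓝 0) :=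
              tendsto_const_div_atTop_nhds_zero_nat r
            have := h0.comp (tendsto_add_atTop_nat 1)
            exact this.congr fun k => by simp only [Function.comp_apply]; push_cast; ring
          have hlim2 : Filter.Tendsto (fun k : ℕ => t₀ - r / ((k:ℝ) + 1)) atTop (𝓝 p.2) := by
            rw [heqt]
            simpa using (tendsto_const_nhds (x := t₀)).sub hd
          have hpr : Filter.Tendsto (fun k : ℕ => ((p.1, t₀ - r/((k:ℝ)+1)) : Euc n × ℝ))
              atTop (𝓝 (p.1, p.2)) := (tendsto_const_nhds).prodMk_nhds hlim2
          simpa using hpr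
        · exact Filter.Eventually.of_forall hseq
      have := le_of_tendsto ((hFc.continuousWithinAt hp).tendsto.comp htend)
        (Filter.Eventually.of_forall hlt')
      exact this
  -- upper bound for F on K
  obtain ⟨C, hC⟩ := (hKc.image_of_continuousOn hFc).bddAbove
  have hCb : ∀ p ∈ K, F p ≤ C := fun p hp => hC (Set.mem_image_of_mem F hp)
  have hC0 : 0 ≤ C := hFz ▸ hCb _ hKz
  -- penalized functions and their max points
  set G : ℕ → Euc n × ℝ → ℝ :=
    fun j p => F p - quart x₀ p.1 - ((j:ℝ)+1) * (p.2 - t₀)^2 with hGdef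
  have hGc : ∀ j : ℕ, ContinuousOn (G j) K := by
    intro j
    apply (hFc.sub (((contDiff_quart x₀).continuous.comp continuous_fst).continuousOn)).sub
    exact (Continuous.continuousOn (by fun_prop))
  have hmax : ∀ j : ℕ, ∃ z ∈ K, IsMaxOn (G j) K z := fun j =>
    hKc.exists_isMaxOn ⟨_, hKz⟩ (hGc j)
  choose z hzK hzmax using hmax
  set M : ℕ → ℝ := fun j => G j (z j) with hMdef
  have hM0 : ∀ j, 0 ≤ M j := by
    intro j
    have := hzmax j hKz
    have hGz0 : G j (x₀, t₀) = 0 := by simp [hGdef, hFz, quart_zero]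
    simpa [hMdef, hGz0] using this
  -- max points do not lie in the past
  have hzt : ∀ j, t₀ ≤ (z j).2 := by
    intro j
    by_contra hcon
    push_neg at hcon
    have hF := hF0 _ (hzK j) hcon.le
    have hq := quart_nonneg x₀ (z j).1
    have hne : (z j).2 - t₀ ≠ 0 := by intro hc; rw [sub_eq_zero] at hc; linarith
    have hsq : 0 < ((z j).2 - t₀)^2 := by
      have := sq_nonneg ((z j).2 - t₀)
      rcases this.lt_or_eq with h' | h'
      · exact h'
      · exact absurd (pow_eq_zero_iff (by norm_num) |>.mp h'.symm) hne
    have : M j < 0 := by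
      simp only [hMdef, hGdef]
      nlinarith [Nat.cast_nonneg (α := ℝ) j]
    linarith [hM0 j]
  -- times converge to t₀
  have htt : Filter.Tendsto (fun j => (z j).2) atTop (𝓝 t₀) := by
    have hbound : ∀ j : ℕ, (z j).2 - t₀ ≤ Real.sqrt (C / ((j:ℝ)+1)) := by
      intro j
      have h1 : ((j:ℝ)+1) * ((z j).2 - t₀)^2 ≤ C := by
        have := hM0 j
        have hq := quart_nonneg x₀ (z j).1
        have := hCb _ (hzK j)
        simp only [hMdef, hGdef] at *
        nlinarith
      rw [Real.le_sqrt (by linarith [hzt j])]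
      · rw [le_div_iff₀ (by positivity)]
        nlinarith
      · exact div_nonneg hC0 (by positivity)
    have hsq : Filter.Tendsto (fun j : ℕ => Real.sqrt (C / ((j:ℝ)+1))) atTop (𝓝 0) := by
      have hd : Filter.Tendsto (fun j : ℕ => C / ((j:ℝ) + 1)) atTop (𝓝 0) := by
        have h0 : Filter.Tendsto (fun k : ℕ => C / (k:ℝ)) atTop (𝓝 0) :=
          tendsto_const_div_atTop_nhds_zero_nat C
        have := h0.comp (tendsto_add_atTop_nat 1)
        exact this.congr fun k => by simp only [Function.comp_apply]; push_cast; ring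
      have := (Real.continuous_sqrt.tendsto 0).comp hd
      rw [Real.sqrt_zero] at this
      exact this
    have : Filter.Tendsto (fun j => (z j).2 - t₀) atTop (𝓝 0) := by
      apply tendsto_of_tendsto_of_tendsto_of_le_of_le tendsto_const_nhds hsq
      · intro j; simp only; linarith [hzt j]
      · exact hbound
    have := this.add (tendsto_const_nhds (x := t₀))
    simpa using this
  -- the max points converge to (x₀,t₀)
  have hzz : Filter.Tendsto z atTop (𝓝 ((x₀, t₀) : Euc n × ℝ)) := by
    apply tendsto_of_subseq_tendsto
    intro ns hns
    obtain ⟨zb, hzbK, ms, hmsm, hmst⟩ := hKc.tendsto_subseq (fun k => hzK (ns k))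
    have hseq_tendsto : Filter.Tendsto (fun k => z (ns (ms k))) atTop (𝓝 zb) := hmst
    have hcomp : Filter.Tendsto (ns ∘ ms) atTop atTop := hns.comp hmsm.tendsto_atTop
    have hzb2 : zb.2 = t₀ := by
      have h1 : Filter.Tendsto (fun k => (z (ns (ms k))).2) atTop (𝓝 zb.2) :=
        (continuous_snd.tendsto zb).comp hseq_tendsto
      have h2 : Filter.Tendsto (fun k => (z (ns (ms k))).2) atTop (𝓝 t₀) := htt.comp hcomp
      exact tendsto_nhds_unique h1 h2
    set W : Euc n × ℝ → ℝ := fun p => F p - quart x₀ p.1 with hWdef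
    have hWc : ContinuousOn W K :=
      hFc.sub (((contDiff_quart x₀).continuous.comp continuous_fst).continuousOn)
    have hWlim : Filter.Tendsto (fun k => W (z (ns (ms k)))) atTop (𝓝 (W zb)) := by
      apply ((hWc.continuousWithinAt hzbK).tendsto).comp
      rw [tendsto_nhdsWithin_iff]
      exact ⟨hseq_tendsto, Filter.Eventually.of_forall (fun k => hzK _)⟩
    have hWpos : ∀ j, 0 ≤ W (z j) := by
      intro j
      have := hM0 j
      have hsq : 0 ≤ ((j:ℝ)+1) * ((z j).2 - t₀)^2 := by positivity
      simp only [hWdef, hMdef, hGdef] at *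
      linarith
    have hWzb : 0 ≤ W zb := le_of_tendsto_of_tendsto' tendsto_const_nhds hWlim
      (fun k => hWpos _)
    have hFzb : F zb ≤ 0 := hF0 zb hzbK (by rw [hzb2])
    have hqzb : quart x₀ zb.1 ≤ 0 := by simp only [hWdef] at hWzb; linarith
    have hzb1 : zb.1 = x₀ := quart_eq_zero hqzb
    refine ⟨ms, ?_⟩
    have : zb = ((x₀, t₀) : Euc n × ℝ) := Prod.ext hzb1 hzb2
    rw [← this]
    exact hseq_tendsto
  -- abbreviations for the perturbed derivative data
  set g : ℕ → Euc n := fun j => sgrad φ (z j).1 (z j).2 + quartG x₀ (z j).1 with hgdef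
  set A : ℕ → (Euc n →L[ℝ] Euc n) :=
    fun j => sHess φ (z j).1 (z j).2 + fderiv ℝ (quartG x₀) (z j).1 with hAdef
  -- limits of the derivative data
  have hz1 : Filter.Tendsto (fun j => (z j).1) atTop (𝓝 x₀) :=
    (continuous_fst.tendsto _).comp hzz
  have htd : Filter.Tendsto (fun j => tderiv φ (z j).1 (z j).2) atTop
      (𝓝 (tderiv φ x₀ t₀)) := by
    have := (P4.continuousAt (hUo.mem_nhds hUz)).tendsto.comp hzz
    exact this
  have hgd : Filter.Tendsto g atTop (𝓝 (sgrad φ x₀ t₀)) := by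
    have h1 := (P5.continuousAt (hUo.mem_nhds hUz)).tendsto.comp hzz
    have h2 : Filter.Tendsto (fun j => quartG x₀ (z j).1) atTop (𝓝 (quartG x₀ x₀)) :=
      ((contDiff_quartG x₀).continuous.tendsto _).comp hz1
    have h3 : quartG x₀ x₀ = 0 := by simp [quartG]
    have := h1.add h2
    rw [h3, add_zero] at this
    exact this
  have hAd : Filter.Tendsto A atTop (𝓝 (sHess φ x₀ t₀)) := by
    have h1 := (P6.continuousAt (hUo.mem_nhds hUz)).tendsto.comp hzz
    have h2 : Filter.Tendsto (fun j => fderiv ℝ (quartG x₀) (z j).1) atTop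
        (𝓝 (fderiv ℝ (quartG x₀) x₀)) := ((continuous_quartG_fderiv x₀).tendsto _).comp hz1
    have h3 : fderiv ℝ (quartG x₀) x₀ = 0 := (hasFDerivAt_quartG_zero x₀).fderiv
    have := h1.add h2
    rw [h3, add_zero] at this
    exact this
  -- the viscosity inequalities at the max points
  have hSub : ∀ j : ℕ, z j ∈ Metric.ball ((x₀,t₀) : Euc n × ℝ) r →
      SubCond h (psiF φ x₀ t₀ ((j:ℝ)+1) (M j)) (z j).1 (z j).2 := by
    intro j hjB
    apply hsub (z j).1 (z j).2 (by rw [← @Prod.mk.eta _ _ (z j)] at hjB ⊢; exact hKQ (Metric.ball_subset_closedBall hjB))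
    refine ⟨psi_parab x₀ t₀ ((j:ℝ)+1) (M j) hUo P1 P2 P3 P4 P5 P6 (hKU (hzK j)), ?_, ?_⟩
    · simp only [psiF, hMdef, hGdef, hFdef]; ring
    · have hball : Metric.ball ((x₀,t₀) : Euc n × ℝ) r ∈ 𝓝 (z j) :=
        Metric.isOpen_ball.mem_nhds hjB
      filter_upwards [hball] with p hp _
      have h2 := hzmax j (Metric.ball_subset_closedBall hp)
      simp only [Set.mem_setOf_eq, hGdef, hFdef] at h2
      simp only [psiF, hMdef, hGdef, hFdef]
      linarith
  have hBall : ∀ᶠ j in atTop, z j ∈ Metric.ball ((x₀,t₀) : Euc n × ℝ) r :=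
    hzz.eventually_mem (Metric.ball_mem_nhds _ hr)
  -- formulas for the derivatives of the perturbed test function at the max point
  have hform : ∀ j : ℕ,
      tderiv (psiF φ x₀ t₀ ((j:ℝ)+1) (M j)) (z j).1 (z j).2
        = tderiv φ (z j).1 (z j).2 + 2*((j:ℝ)+1)*((z j).2 - t₀)
      ∧ sgrad (psiF φ x₀ t₀ ((j:ℝ)+1) (M j)) (z j).1 (z j).2 = g j
      ∧ sHess (psiF φ x₀ t₀ ((j:ℝ)+1) (M j)) (z j).1 (z j).2 = A j := by
    intro j
    have hjU : z j ∈ U := hKU (hzK j)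
    have h1 := psi_tderiv (φ := φ) (U := U) x₀ t₀ ((j:ℝ)+1) (M j) P1 hjU
    have h2 := psi_sgrad (φ := φ) (U := U) x₀ t₀ ((j:ℝ)+1) (M j) P2 hjU
    have h3 := psi_sHess (φ := φ) (U := U) x₀ t₀ ((j:ℝ)+1) (M j) hUo P2 hjU
    rw [← @Prod.mk.eta _ _ (z j)] at h1 h2 h3
    exact ⟨h1, h2, h3⟩
  have hApp : Filter.Tendsto (fun j => (⟪A j (g j), g j⟫ : ℝ)) atTop
      (𝓝 (⟪sHess φ x₀ t₀ (sgrad φ x₀ t₀), sgrad φ x₀ t₀⟫ : ℝ)) := by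
    have h1 : Filter.Tendsto (fun j => A j (g j)) atTop (𝓝 (sHess φ x₀ t₀ (sgrad φ x₀ t₀))) :=
      (isBoundedBilinearMap_apply.continuous.tendsto _).comp (hAd.prodMk_nhds hgd)
    exact h1.inner hgd
  have ht0 : ∀ j : ℕ, 0 ≤ 2*((j:ℝ)+1)*((z j).2 - t₀) := by
    intro j
    have := hzt j
    have := Nat.cast_nonneg (α := ℝ) j
    nlinarith
  -- the three cases
  refine ⟨?_, ?_, ?_⟩
  · -- gradient nonzero
    intro hgz
    have hne : ∀ᶠ j in atTop, g j ≠ 0 := hgd.eventually_ne hgz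
    have hIneq : ∀ᶠ j in atTop,
        tderiv φ (z j).1 (z j).2 ≤ ‖g j‖^(h-3) * ⟪A j (g j), g j⟫ := by
      filter_upwards [hBall, hne] with j hjB hgj
      obtain ⟨S1, _, _⟩ := hSub j hjB
      obtain ⟨e1, e2, e3⟩ := hform j
      rw [e2] at S1
      have hS := S1 hgj
      rw [hLap, e1, e2, e3] at hS
      linarith [ht0 j]
    have hR : Filter.Tendsto (fun j => ‖g j‖^(h-3) * ⟪A j (g j), g j⟫) atTop
        (𝓝 (hLap h φ x₀ t₀)) := by
      have hnrm : Filter.Tendsto (fun j => ‖g j‖) atTop (𝓝 ‖sgrad φ x₀ t₀‖) :=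
        (continuous_norm.tendsto _).comp hgd
      have hone : Filter.Tendsto (fun j => ‖g j‖^(h-3)) atTop (𝓝 (‖sgrad φ x₀ t₀‖^(h-3))) :=
        (Real.continuousAt_rpow_const _ _ (Or.inl (norm_ne_zero_iff.mpr hgz))).tendsto.comp hnrm
      exact hone.mul hApp
    have := le_of_tendsto_of_tendsto htd hR hIneq
    linarith
  · -- gradient zero, h = 1
    intro hgz hh1
    have hIneq : ∀ᶠ j in atTop, tderiv φ (z j).1 (z j).2
        ≤ qMax (sHess φ x₀ t₀) + ‖A j - sHess φ x₀ t₀‖ := by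
      filter_upwards [hBall] with j hjB
      obtain ⟨S1, S2, _⟩ := hSub j hjB
      obtain ⟨e1, e2, e3⟩ := hform j
      have hqm : qMax (A j) ≤ qMax (sHess φ x₀ t₀) + ‖A j - sHess φ x₀ t₀‖ := qMax_le_add _ _
      by_cases hgj : g j = 0
      · have hS := S2 (by rw [e2]; exact hgj) hh1
        rw [e1, e3] at hS
        linarith [ht0 j]
      · have hS := S1 (by rw [e2]; exact hgj)
        rw [hLap, e1, e2, e3] at hS
        have hpos : 0 < ‖g j‖ := norm_pos_iff.mpr hgj
        set w : Euc n := ‖g j‖⁻¹ • (g j) with hwdef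
        have hw : ‖w‖ = 1 := norm_smul_inv_norm hgj
        have hval : ‖g j‖^(h-3) * ⟪A j (g j), g j⟫ = ⟪A j w, w⟫ := by
          rw [hh1]
          have h13 : ((1:ℝ) - 3) = -((2:ℕ):ℝ) := by norm_num
          rw [h13, Real.rpow_neg hpos.le, Real.rpow_natCast]
          rw [hwdef, map_smul, inner_smul_left, inner_smul_right]
          simp only [RCLike.conj_to_real, map_inv₀, conj_trivial]
          rw [sq, mul_inv]
          ring
        have hq := inner_le_qMax (A j) hw
        rw [hval] at hS
        linarith [ht0 j]
    have hR : Filter.Tendsto (fun j => qMax (sHess φ x₀ t₀) + ‖A j - sHess φ x₀ t₀‖) atTop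
        (𝓝 (qMax (sHess φ x₀ t₀))) := by
      have hnorm0 : Filter.Tendsto (fun j => ‖A j - sHess φ x₀ t₀‖) atTop (𝓝 0) :=
        tendsto_iff_norm_sub_tendsto_zero.mp hAd
      simpa using (tendsto_const_nhds (x := qMax (sHess φ x₀ t₀))).add hnorm0
    have := le_of_tendsto_of_tendsto htd hR hIneq
    linarith
  · -- gradient zero, h > 1
    intro hgz hh1
    have hIneq : ∀ᶠ j in atTop,
        tderiv φ (z j).1 (z j).2 ≤ ‖g j‖^(h-1) * ‖A j‖ := by
      filter_upwards [hBall] with j hjB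
      obtain ⟨S1, _, S3⟩ := hSub j hjB
      obtain ⟨e1, e2, e3⟩ := hform j
      by_cases hgj : g j = 0
      · have hS := S3 (by rw [e2]; exact hgj) hh1
        rw [e1] at hS
        have hz0 : ‖g j‖^(h-1) * ‖A j‖ = 0 := by
          rw [hgj, norm_zero, Real.zero_rpow (by linarith : h - 1 ≠ 0), zero_mul]
        rw [hz0]
        linarith [ht0 j]
      · have hS := S1 (by rw [e2]; exact hgj)
        rw [hLap, e1, e2, e3] at hS
        have hpos : 0 < ‖g j‖ := norm_pos_iff.mpr hgj
        have hinner : (⟪A j (g j), g j⟫ : ℝ) ≤ ‖A j‖ * ‖g j‖^(2:ℕ) := by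
          calc (⟪A j (g j), g j⟫ : ℝ) ≤ ‖A j (g j)‖ * ‖g j‖ := real_inner_le_norm _ _
            _ ≤ ‖A j‖ * ‖g j‖^(2:ℕ) := by
                have := (A j).le_opNorm (g j)
                nlinarith [norm_nonneg (A j (g j)), norm_nonneg (g j)]
        have hrw : ‖g j‖^(h-3) * (‖A j‖ * ‖g j‖^(2:ℕ)) = ‖g j‖^(h-1) * ‖A j‖ := by
          rw [← Real.rpow_natCast ‖g j‖ 2]
          rw [show ‖g j‖^(h-3) * (‖A j‖ * ‖g j‖^((2:ℕ):ℝ))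
            = (‖g j‖^(h-3) * ‖g j‖^((2:ℕ):ℝ)) * ‖A j‖ by ring]
          rw [← Real.rpow_add hpos]
          rw [show h - 3 + ((2:ℕ):ℝ) = h - 1 by push_cast; ring]
        have hmul : ‖g j‖^(h-3) * ⟪A j (g j), g j⟫ ≤ ‖g j‖^(h-1) * ‖A j‖ := by
          rw [← hrw]
          exact mul_le_mul_of_nonneg_left hinner (Real.rpow_nonneg hpos.le _)
        linarith [ht0 j]
    have hR : Filter.Tendsto (fun j => ‖g j‖^(h-1) * ‖A j‖) atTop (𝓝 0) := by
      have hnrm : Filter.Tendsto (fun j => ‖g j‖) atTop (𝓝 ‖sgrad φ x₀ t₀‖) :=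
        (continuous_norm.tendsto _).comp hgd
      rw [hgz, norm_zero] at hnrm
      have hone : Filter.Tendsto (fun j => ‖g j‖^(h-1)) atTop (𝓝 ((0:ℝ)^(h-1))) :=
        (Real.continuousAt_rpow_const _ _ (Or.inr (by linarith))).tendsto.comp hnrm
      rw [Real.zero_rpow (by linarith : h - 1 ≠ 0)] at hone
      have hAn : Filter.Tendsto (fun j => ‖A j‖) atTop (𝓝 ‖sHess φ x₀ t₀‖) :=
        (continuous_norm.tendsto _).comp hAd
      simpa using hone.mul hAn
    exact le_of_tendsto_of_tendsto htd hR hIneq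

end Core

/-- a continuous function on Ω̄ × [0,T) is a past parabolic viscosity
h-infinite solution of u_t − Δ^h_∞u = 0 in Ω_T iff it is a parabolic viscosity
h-infinite solution in Ω_T. -/
theorem statement4
    (n : ℕ) (h : ℝ) (hh : 1 ≤ h) (Ω : Set (Euc n)) (hΩo : IsOpen Ω)
    (hΩb : Bornology.IsBounded Ω) (T : ℝ) (hT : 0 < T)
    (u : Euc n → ℝ → ℝ)
    (hu : ContinuousOn (fun p : Euc n × ℝ => u p.1 p.2) (closure Ω ×ˢ Set.Ico 0 T)) :
    (IsPastParaSub h (Ω ×ˢ Set.Ioo 0 T) u ∧ IsPastParaSuper h (Ω ×ˢ Set.Ioo 0 T) u)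
    ↔ (IsParaSub h (Ω ×ˢ Set.Ioo 0 T) u ∧ IsParaSuper h (Ω ×ˢ Set.Ioo 0 T) u) := by
  constructor
  · rintro ⟨hps, hpS⟩
    exact ⟨hps.toSub, hpS.toSuper⟩
  · rintro ⟨hs, hS⟩
    have hQ : IsOpen (Ω ×ˢ Set.Ioo 0 T) := hΩo.prod isOpen_Ioo
    have hsub : (Ω ×ˢ Set.Ioo 0 T : Set (Euc n × ℝ)) ⊆ closure Ω ×ˢ Set.Ico 0 T := by
      apply Set.prod_mono subset_closure
      exact Set.Ioo_subset_Ico_self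
    have hu' : ContinuousOn (fun p : Euc n × ℝ => u p.1 p.2) (Ω ×ˢ Set.Ioo 0 T) :=
      hu.mono hsub
    refine ⟨core hh hQ hu' hs, ?_⟩
    have hv : ContinuousOn (fun p : Euc n × ℝ => -(u p.1 p.2)) (Ω ×ˢ Set.Ioo 0 T) := hu'.neg
    exact IsPastParaSub.neg_super hS.1 (core hh hQ hv hS.neg_sub)
end
end

section
/- Let h ≥ 1, let Ω ⊂ ℝⁿ be a bounded open set and T > 0, and let g be continuous on Ω̄ × [0,T). If u is continuous on Ω̄ × [0,T), is a parabolic viscosity h-infinite solution of u_t − Δ^h_∞u = 0 in Ω_T, and satisfies u = g on ∂_par Ω_T, then sup_{(x,t) ∈ Ω_T} |u(x,t)| ≤ sup_{(x,t) ∈ ∂_par Ω_T} |g(x,t)|. -/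
open scoped RealInnerProductSpace
open Filter Topology Asymptotics

noncomputable section

variable {n : ℕ}

section Aux

lemma hasDerivAt_tf (C c T'' t : ℝ) (ht : t ≠ T'') :
    HasDerivAt (fun s => C + c * (T'' - s)⁻¹) (c * ((T'' - t) ^ 2)⁻¹) t := by
  have h1 : HasDerivAt (fun s : ℝ => T'' - s) (0 - 1) t :=
    (hasDerivAt_const t T'').sub (hasDerivAt_id t)
  have h3 := ((h1.inv (sub_ne_zero.mpr (Ne.symm ht))).const_mul c).const_add C
  convert h3 using 1
  · rfl
  · rfl
  · rfl
  · ring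

lemma sgrad_tf (C c T'' : ℝ) (x : Euc n) (t : ℝ) :
    sgrad (fun (_ : Euc n) s => C + c * (T'' - s)⁻¹) x t = 0 := by
  unfold sgrad; exact gradient_const x _

lemma sHess_tf (C c T'' : ℝ) (x : Euc n) (t : ℝ) :
    sHess (fun (_ : Euc n) s => C + c * (T'' - s)⁻¹) x t = 0 := by
  unfold sHess
  have hfun : (fun y : Euc n => sgrad (fun (_ : Euc n) s => C + c * (T'' - s)⁻¹) y t)
      = fun _ => (0 : Euc n) := funext fun y => sgrad_tf C c T'' y t
  rw [hfun, fderiv_fun_const]; rfl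

lemma tderiv_tf (C c T'' t : ℝ) (x : Euc n) (ht : t ≠ T'') :
    tderiv (fun (_ : Euc n) s => C + c * (T'' - s)⁻¹) x t = c * ((T'' - t) ^ 2)⁻¹ :=
  (hasDerivAt_tf C c T'' t ht).deriv

lemma qMax_zero : qMax (0 : Euc n →L[ℝ] Euc n) = 0 := by
  unfold qMax
  have hsub : {r : ℝ | ∃ η : Euc n, ‖η‖ = 1 ∧ r = ⟪(0 : Euc n →L[ℝ] Euc n) η, η⟫} ⊆ {0} := by
    rintro r ⟨η, -, rfl⟩
    simp
  rcases Set.subset_singleton_iff_eq.mp hsub with hS | hS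
  · rw [hS]; exact Real.sSup_empty
  · rw [hS]; exact csSup_singleton 0

lemma qMin_zero : qMin (0 : Euc n →L[ℝ] Euc n) = 0 := by
  unfold qMin
  have hsub : {r : ℝ | ∃ η : Euc n, ‖η‖ = 1 ∧ r = ⟪(0 : Euc n →L[ℝ] Euc n) η, η⟫} ⊆ {0} := by
    rintro r ⟨η, -, rfl⟩
    simp
  rcases Set.subset_singleton_iff_eq.mp hsub with hS | hS
  · rw [hS]; exact Real.sInf_empty
  · rw [hS]; exact csInf_singleton 0

lemma parabolicC2_tf (C c T'' : ℝ) (x₀ : Euc n) (t₀ : ℝ) (ht : t₀ ≠ T'') :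
    ParabolicC2 (fun (_ : Euc n) s => C + c * (T'' - s)⁻¹) x₀ t₀ := by
  have hUopen : IsOpen {p : Euc n × ℝ | p.2 ≠ T''} :=
    isOpen_compl_singleton.preimage continuous_snd
  have hne : ∀ p : Euc n × ℝ, p ∈ {p : Euc n × ℝ | p.2 ≠ T''} → T'' - p.2 ≠ 0 :=
    fun p hp => sub_ne_zero.mpr (Ne.symm hp)
  refine ⟨{p : Euc n × ℝ | p.2 ≠ T''}, hUopen.mem_nhds ht, ?_, ?_, ?_, ?_, ?_, ?_⟩
  · exact fun p hp => (hasDerivAt_tf C c T'' p.2 hp).differentiableAt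
  · exact fun p _ => contDiffAt_const
  · exact continuousOn_const.add (continuousOn_const.mul
      (((continuous_const.sub continuous_snd).continuousOn).inv₀ hne))
  · refine ContinuousOn.congr (f := fun p : Euc n × ℝ => c * ((T'' - p.2) ^ 2)⁻¹) ?_ ?_
    · exact continuousOn_const.mul
        ((((continuous_const.sub continuous_snd).pow 2).continuousOn).inv₀
          fun p hp => pow_ne_zero 2 (hne p hp))
    · exact fun p hp => tderiv_tf C c T'' p.2 p.1 hp
  · refine ContinuousOn.congr (f := fun _ : Euc n × ℝ => (0 : Euc n)) continuousOn_const ?_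
    exact fun p _ => sgrad_tf C c T'' p.1 p.2
  · refine ContinuousOn.congr (f := fun _ : Euc n × ℝ => (0 : Euc n →L[ℝ] Euc n))
      continuousOn_const ?_
    exact fun p _ => sHess_tf C c T'' p.1 p.2

lemma core_sub {n : ℕ} {h : ℝ} (hh : 1 ≤ h) {Ω : Set (Euc n)} (hΩo : IsOpen Ω)
    (hcΩ : IsCompact (closure Ω)) {T : ℝ} {u : Euc n → ℝ → ℝ}
    (huc : ContinuousOn (fun p : Euc n × ℝ => u p.1 p.2) (closure Ω ×ˢ Set.Ico 0 T))
    (hsub : IsParaSub h (Ω ×ˢ Set.Ioo 0 T) u)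
    {x₁ : Euc n} {t₁ : ℝ} (hx₁ : x₁ ∈ Ω) (ht₁ : t₁ ∈ Set.Ioo 0 T)
    {T'' : ℝ} (hT1 : t₁ < T'') (hT2 : T'' < T) {M : ℝ}
    (hM : ∀ q : Euc n × ℝ,
      q ∈ (closure Ω ×ˢ ({0} : Set ℝ)) ∪ (frontier Ω ×ˢ Set.Icc 0 T'') → u q.1 q.2 ≤ M)
    {ε : ℝ} (hε : 0 < ε) :
    u x₁ t₁ ≤ M + ε * (T'' - t₁)⁻¹ := by
  set v : Euc n × ℝ → ℝ := fun p => u p.1 p.2 - ε * (T'' - p.2)⁻¹ with hv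
  have hsubK : (closure Ω ×ˢ Set.Icc 0 T'') ⊆ closure Ω ×ˢ Set.Ico 0 T :=
    Set.prod_mono_right (Set.Icc_subset_Ico_right hT2)
  have hKco : IsCompact (closure Ω ×ˢ Set.Icc 0 T'') := hcΩ.prod isCompact_Icc
  have hx₁c : x₁ ∈ closure Ω := subset_closure hx₁
  have ht₁I : t₁ ∈ Set.Icc 0 T'' := ⟨le_of_lt ht₁.1, le_of_lt hT1⟩
  obtain ⟨pm, hpmK, hpm⟩ := hKco.exists_isMaxOn ⟨(x₁, t₁), ⟨hx₁c, ht₁I⟩⟩ (huc.mono hsubK)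
  set Mu := u pm.1 pm.2 with hMudef
  have hMu : ∀ q : Euc n × ℝ, q ∈ closure Ω ×ˢ Set.Icc 0 T'' → u q.1 q.2 ≤ Mu :=
    fun q hq => isMaxOn_iff.mp hpm q hq
  have hpen₁ : 0 < T'' - t₁ := sub_pos.mpr hT1
  have hvx₁eq : v (x₁, t₁) = u x₁ t₁ - ε * (T'' - t₁)⁻¹ := rfl
  set A := Mu - v (x₁, t₁) with hA
  have hApos : 0 < A := by
    have h1 : u x₁ t₁ ≤ Mu := hMu (x₁, t₁) ⟨hx₁c, ht₁I⟩
    have h2 : 0 < ε * (T'' - t₁)⁻¹ := mul_pos hε (inv_pos.mpr hpen₁)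
    rw [hA, hvx₁eq]; linarith
  set δ := min (T'' - t₁) (ε / A) / 2 with hδ
  have hδpos : 0 < δ := half_pos (lt_min hpen₁ (div_pos hε hApos))
  have hδ₁ : δ < T'' - t₁ := by
    have := min_le_left (T'' - t₁) (ε / A); rw [hδ]; linarith
  have hδ₃ : δ < ε / A := by
    have h1 := min_le_right (T'' - t₁) (ε / A)
    have h2 : 0 < ε / A := div_pos hε hApos
    rw [hδ]; linarith
  set tstar := T'' - δ with htsdef
  have htstar₁ : t₁ < tstar := by rw [htsdef]; linarith
  have htstar₂ : tstar < T'' := by rw [htsdef]; linarith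
  have hKs : IsCompact (closure Ω ×ˢ Set.Icc 0 tstar) := hcΩ.prod isCompact_Icc
  have hKssub : (closure Ω ×ˢ Set.Icc 0 tstar) ⊆ closure Ω ×ˢ Set.Icc 0 T'' :=
    Set.prod_mono_right (Set.Icc_subset_Icc_right (le_of_lt htstar₂))
  have hvc : ContinuousOn v (closure Ω ×ˢ Set.Icc 0 tstar) := by
    refine ContinuousOn.sub (huc.mono (hKssub.trans hsubK)) ?_
    refine continuousOn_const.mul
      (((continuous_const.sub continuous_snd).continuousOn).inv₀ ?_)
    rintro ⟨x, t⟩ ⟨-, ht0, htt⟩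
    have : t < T'' := lt_of_le_of_lt htt htstar₂
    exact ne_of_gt (by show (0:ℝ) < T'' - t; linarith)
  obtain ⟨p₀, hp₀K, hp₀max⟩ := hKs.exists_isMaxOn
    ⟨(x₁, t₁), ⟨hx₁c, ⟨le_of_lt ht₁.1, le_of_lt htstar₁⟩⟩⟩ hvc
  obtain ⟨hp₀x, hp₀t0, hp₀ts⟩ : p₀.1 ∈ closure Ω ∧ 0 ≤ p₀.2 ∧ p₀.2 ≤ tstar :=
    ⟨hp₀K.1, hp₀K.2.1, hp₀K.2.2⟩
  have hp₀T'' : p₀.2 < T'' := lt_of_le_of_lt hp₀ts htstar₂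
  have hvx₁ : v (x₁, t₁) ≤ v p₀ :=
    isMaxOn_iff.mp hp₀max (x₁, t₁) ⟨hx₁c, ⟨le_of_lt ht₁.1, le_of_lt htstar₁⟩⟩
  have hglob : ∀ q : Euc n × ℝ, q.1 ∈ closure Ω → 0 ≤ q.2 → q.2 < T'' → v q ≤ v p₀ := by
    rintro ⟨x, t⟩ hx ht0 htT
    by_cases hts : t ≤ tstar
    · exact isMaxOn_iff.mp hp₀max (x, t) ⟨hx, ht0, hts⟩
    · push_neg at hts
      have h1 : u x t ≤ Mu := hMu (x, t) ⟨hx, ht0, le_of_lt htT⟩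
      have h2 : 0 < T'' - t := sub_pos.mpr htT
      have h3 : T'' - t < δ := by rw [htsdef] at hts; linarith
      have h4 : A < ε * (T'' - t)⁻¹ := by
        rw [← div_eq_mul_inv, lt_div_iff₀ h2]
        have h5 : T'' - t < ε / A := h3.trans hδ₃
        calc A * (T'' - t) < A * (ε / A) := mul_lt_mul_of_pos_left h5 hApos
          _ = ε := by field_simp
      have hvt : v (x, t) = u x t - ε * (T'' - t)⁻¹ := rfl
      have hMA : Mu - A = v (x₁, t₁) := by rw [hA]; ring
      rw [hvt]
      have hchain : u x t - ε * (T'' - t)⁻¹ < v (x₁, t₁) := by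
        rw [← hMA]; linarith
      exact le_of_lt (lt_of_lt_of_le hchain hvx₁)
  by_cases hint : p₀.1 ∈ Ω ∧ 0 < p₀.2
  · exfalso
    obtain ⟨hxΩ, ht0'⟩ := hint
    have hQ : (p₀.1, p₀.2) ∈ Ω ×ˢ Set.Ioo 0 T := ⟨hxΩ, ht0', lt_trans hp₀T'' hT2⟩
    set Cc := u p₀.1 p₀.2 - ε * (T'' - p₀.2)⁻¹ with hCc
    set φ : Euc n → ℝ → ℝ := fun _ s => Cc + ε * (T'' - s)⁻¹ with hφ
    have hvp₀ : v p₀ = Cc := rfl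
    have hTA : TAbove (Ω ×ˢ Set.Ioo 0 T) u φ p₀.1 p₀.2 := by
      refine ⟨parabolicC2_tf Cc ε T'' p₀.1 p₀.2 (ne_of_lt hp₀T''), ?_, ?_⟩
      · show u p₀.1 p₀.2 = Cc + ε * (T'' - p₀.2)⁻¹
        rw [hCc]; ring
      · have hUopen : IsOpen {p : Euc n × ℝ | p.2 < T''} :=
          isOpen_Iio.preimage continuous_snd
        refine Filter.eventually_of_mem (hUopen.mem_nhds hp₀T'') ?_
        rintro ⟨x, t⟩ (hlt : t < T'') ⟨hxmem, htmem⟩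
        have hvq : v (x, t) ≤ v p₀ :=
          hglob (x, t) (subset_closure hxmem) (le_of_lt htmem.1) hlt
        have hvt : v (x, t) = u x t - ε * (T'' - t)⁻¹ := rfl
        show u x t ≤ Cc + ε * (T'' - t)⁻¹
        rw [hvt, hvp₀] at hvq; linarith
    have hSC := hsub.2 p₀.1 p₀.2 hQ φ hTA
    have hg0 : sgrad φ p₀.1 p₀.2 = 0 := sgrad_tf Cc ε T'' p₀.1 p₀.2
    have hH0 : sHess φ p₀.1 p₀.2 = 0 := sHess_tf Cc ε T'' p₀.1 p₀.2
    have htd : tderiv φ p₀.1 p₀.2 = ε * ((T'' - p₀.2) ^ 2)⁻¹ :=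
      tderiv_tf Cc ε T'' p₀.2 p₀.1 (ne_of_lt hp₀T'')
    have htdpos : 0 < tderiv φ p₀.1 p₀.2 := by
      rw [htd]
      exact mul_pos hε (inv_pos.mpr (pow_pos (sub_pos.mpr hp₀T'') 2))
    by_cases hone : h = 1
    · have := hSC.2.1 hg0 hone
      rw [hH0, qMax_zero] at this; linarith
    · have := hSC.2.2 hg0 (lt_of_le_of_ne hh (Ne.symm hone))
      linarith
  · have hbd : p₀ ∈ (closure Ω ×ˢ ({0} : Set ℝ)) ∪ (frontier Ω ×ˢ Set.Icc 0 T'') := by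
      push_neg at hint
      by_cases hxo : p₀.1 ∈ Ω
      · left
        exact ⟨hp₀x, le_antisymm (hint hxo) hp₀t0⟩
      · right
        refine ⟨?_, hp₀t0, le_of_lt hp₀T''⟩
        rw [frontier, hΩo.interior_eq]
        exact ⟨hp₀x, hxo⟩
    have h2 : v p₀ ≤ u p₀.1 p₀.2 := by
      have hvp : v p₀ = u p₀.1 p₀.2 - ε * (T'' - p₀.2)⁻¹ := rfl
      have hpos : 0 < ε * (T'' - p₀.2)⁻¹ :=
        mul_pos hε (inv_pos.mpr (sub_pos.mpr hp₀T''))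
      rw [hvp]; linarith
    have h3 := hM p₀ hbd
    rw [hvx₁eq] at hvx₁
    have h4 : u x₁ t₁ - ε * (T'' - t₁)⁻¹ ≤ M := le_trans hvx₁ (le_trans h2 h3)
    linarith

lemma core_super {n : ℕ} {h : ℝ} (hh : 1 ≤ h) {Ω : Set (Euc n)} (hΩo : IsOpen Ω)
    (hcΩ : IsCompact (closure Ω)) {T : ℝ} {u : Euc n → ℝ → ℝ}
    (huc : ContinuousOn (fun p : Euc n × ℝ => u p.1 p.2) (closure Ω ×ˢ Set.Ico 0 T))
    (hsup : IsParaSuper h (Ω ×ˢ Set.Ioo 0 T) u)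
    {x₁ : Euc n} {t₁ : ℝ} (hx₁ : x₁ ∈ Ω) (ht₁ : t₁ ∈ Set.Ioo 0 T)
    {T'' : ℝ} (hT1 : t₁ < T'') (hT2 : T'' < T) {m : ℝ}
    (hm : ∀ q : Euc n × ℝ,
      q ∈ (closure Ω ×ˢ ({0} : Set ℝ)) ∪ (frontier Ω ×ˢ Set.Icc 0 T'') → m ≤ u q.1 q.2)
    {ε : ℝ} (hε : 0 < ε) :
    m - ε * (T'' - t₁)⁻¹ ≤ u x₁ t₁ := by
  set v : Euc n × ℝ → ℝ := fun p => u p.1 p.2 + ε * (T'' - p.2)⁻¹ with hv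
  have hsubK : (closure Ω ×ˢ Set.Icc 0 T'') ⊆ closure Ω ×ˢ Set.Ico 0 T :=
    Set.prod_mono_right (Set.Icc_subset_Ico_right hT2)
  have hKco : IsCompact (closure Ω ×ˢ Set.Icc 0 T'') := hcΩ.prod isCompact_Icc
  have hx₁c : x₁ ∈ closure Ω := subset_closure hx₁
  have ht₁I : t₁ ∈ Set.Icc 0 T'' := ⟨le_of_lt ht₁.1, le_of_lt hT1⟩
  obtain ⟨pm, hpmK, hpm⟩ := hKco.exists_isMinOn ⟨(x₁, t₁), ⟨hx₁c, ht₁I⟩⟩ (huc.mono hsubK)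
  set mu := u pm.1 pm.2 with hmudef
  have hmu : ∀ q : Euc n × ℝ, q ∈ closure Ω ×ˢ Set.Icc 0 T'' → mu ≤ u q.1 q.2 :=
    fun q hq => isMinOn_iff.mp hpm q hq
  have hpen₁ : 0 < T'' - t₁ := sub_pos.mpr hT1
  have hvx₁eq : v (x₁, t₁) = u x₁ t₁ + ε * (T'' - t₁)⁻¹ := rfl
  set A := v (x₁, t₁) - mu with hA
  have hApos : 0 < A := by
    have h1 : mu ≤ u x₁ t₁ := hmu (x₁, t₁) ⟨hx₁c, ht₁I⟩
    have h2 : 0 < ε * (T'' - t₁)⁻¹ := mul_pos hε (inv_pos.mpr hpen₁)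
    rw [hA, hvx₁eq]; linarith
  set δ := min (T'' - t₁) (ε / A) / 2 with hδ
  have hδpos : 0 < δ := half_pos (lt_min hpen₁ (div_pos hε hApos))
  have hδ₁ : δ < T'' - t₁ := by
    have := min_le_left (T'' - t₁) (ε / A); rw [hδ]; linarith
  have hδ₃ : δ < ε / A := by
    have h1 := min_le_right (T'' - t₁) (ε / A)
    have h2 : 0 < ε / A := div_pos hε hApos
    rw [hδ]; linarith
  set tstar := T'' - δ with htsdef
  have htstar₁ : t₁ < tstar := by rw [htsdef]; linarith
  have htstar₂ : tstar < T'' := by rw [htsdef]; linarith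
  have hKs : IsCompact (closure Ω ×ˢ Set.Icc 0 tstar) := hcΩ.prod isCompact_Icc
  have hKssub : (closure Ω ×ˢ Set.Icc 0 tstar) ⊆ closure Ω ×ˢ Set.Icc 0 T'' :=
    Set.prod_mono_right (Set.Icc_subset_Icc_right (le_of_lt htstar₂))
  have hvc : ContinuousOn v (closure Ω ×ˢ Set.Icc 0 tstar) := by
    refine ContinuousOn.add (huc.mono (hKssub.trans hsubK)) ?_
    refine continuousOn_const.mul
      (((continuous_const.sub continuous_snd).continuousOn).inv₀ ?_)
    rintro ⟨x, t⟩ ⟨-, ht0, htt⟩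
    have : t < T'' := lt_of_le_of_lt htt htstar₂
    exact ne_of_gt (by show (0:ℝ) < T'' - t; linarith)
  obtain ⟨p₀, hp₀K, hp₀min⟩ := hKs.exists_isMinOn
    ⟨(x₁, t₁), ⟨hx₁c, ⟨le_of_lt ht₁.1, le_of_lt htstar₁⟩⟩⟩ hvc
  obtain ⟨hp₀x, hp₀t0, hp₀ts⟩ : p₀.1 ∈ closure Ω ∧ 0 ≤ p₀.2 ∧ p₀.2 ≤ tstar :=
    ⟨hp₀K.1, hp₀K.2.1, hp₀K.2.2⟩
  have hp₀T'' : p₀.2 < T'' := lt_of_le_of_lt hp₀ts htstar₂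
  have hvx₁ : v p₀ ≤ v (x₁, t₁) :=
    isMinOn_iff.mp hp₀min (x₁, t₁) ⟨hx₁c, ⟨le_of_lt ht₁.1, le_of_lt htstar₁⟩⟩
  have hglob : ∀ q : Euc n × ℝ, q.1 ∈ closure Ω → 0 ≤ q.2 → q.2 < T'' → v p₀ ≤ v q := by
    rintro ⟨x, t⟩ hx ht0 htT
    by_cases hts : t ≤ tstar
    · exact isMinOn_iff.mp hp₀min (x, t) ⟨hx, ht0, hts⟩
    · push_neg at hts
      have h1 : mu ≤ u x t := hmu (x, t) ⟨hx, ht0, le_of_lt htT⟩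
      have h2 : 0 < T'' - t := sub_pos.mpr htT
      have h3 : T'' - t < δ := by rw [htsdef] at hts; linarith
      have h4 : A < ε * (T'' - t)⁻¹ := by
        rw [← div_eq_mul_inv, lt_div_iff₀ h2]
        have h5 : T'' - t < ε / A := h3.trans hδ₃
        calc A * (T'' - t) < A * (ε / A) := mul_lt_mul_of_pos_left h5 hApos
          _ = ε := by field_simp
      have hvt : v (x, t) = u x t + ε * (T'' - t)⁻¹ := rfl
      have hMA : mu + A = v (x₁, t₁) := by rw [hA]; ring
      rw [hvt]
      have hchain : v (x₁, t₁) < u x t + ε * (T'' - t)⁻¹ := by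
        rw [← hMA]; linarith
      exact le_of_lt (lt_of_le_of_lt hvx₁ hchain)
  by_cases hint : p₀.1 ∈ Ω ∧ 0 < p₀.2
  · exfalso
    obtain ⟨hxΩ, ht0'⟩ := hint
    have hQ : (p₀.1, p₀.2) ∈ Ω ×ˢ Set.Ioo 0 T := ⟨hxΩ, ht0', lt_trans hp₀T'' hT2⟩
    set Cc := u p₀.1 p₀.2 + ε * (T'' - p₀.2)⁻¹ with hCc
    set φ : Euc n → ℝ → ℝ := fun _ s => Cc + (-ε) * (T'' - s)⁻¹ with hφ
    have hvp₀ : v p₀ = Cc := rfl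
    have hTB : TBelow (Ω ×ˢ Set.Ioo 0 T) u φ p₀.1 p₀.2 := by
      refine ⟨parabolicC2_tf Cc (-ε) T'' p₀.1 p₀.2 (ne_of_lt hp₀T''), ?_, ?_⟩
      · show u p₀.1 p₀.2 = Cc + (-ε) * (T'' - p₀.2)⁻¹
        rw [hCc]; ring
      · have hUopen : IsOpen {p : Euc n × ℝ | p.2 < T''} :=
          isOpen_Iio.preimage continuous_snd
        refine Filter.eventually_of_mem (hUopen.mem_nhds hp₀T'') ?_
        rintro ⟨x, t⟩ (hlt : t < T'') ⟨hxmem, htmem⟩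
        have hvq : v p₀ ≤ v (x, t) :=
          hglob (x, t) (subset_closure hxmem) (le_of_lt htmem.1) hlt
        have hvt : v (x, t) = u x t + ε * (T'' - t)⁻¹ := rfl
        show Cc + (-ε) * (T'' - t)⁻¹ ≤ u x t
        rw [hvt, hvp₀] at hvq; linarith
    have hSC := hsup.2 p₀.1 p₀.2 hQ φ hTB
    have hg0 : sgrad φ p₀.1 p₀.2 = 0 := sgrad_tf Cc (-ε) T'' p₀.1 p₀.2
    have hH0 : sHess φ p₀.1 p₀.2 = 0 := sHess_tf Cc (-ε) T'' p₀.1 p₀.2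
    have htd : tderiv φ p₀.1 p₀.2 = (-ε) * ((T'' - p₀.2) ^ 2)⁻¹ :=
      tderiv_tf Cc (-ε) T'' p₀.2 p₀.1 (ne_of_lt hp₀T'')
    have htdneg : tderiv φ p₀.1 p₀.2 < 0 := by
      rw [htd]
      have := mul_pos hε (inv_pos.mpr (pow_pos (sub_pos.mpr hp₀T'') 2))
      linarith
    by_cases hone : h = 1
    · have := hSC.2.1 hg0 hone
      rw [hH0, qMin_zero] at this; linarith
    · have := hSC.2.2 hg0 (lt_of_le_of_ne hh (Ne.symm hone))
      linarith
  · have hbd : p₀ ∈ (closure Ω ×ˢ ({0} : Set ℝ)) ∪ (frontier Ω ×ˢ Set.Icc 0 T'') := by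
      push_neg at hint
      by_cases hxo : p₀.1 ∈ Ω
      · left
        exact ⟨hp₀x, le_antisymm (hint hxo) hp₀t0⟩
      · right
        refine ⟨?_, hp₀t0, le_of_lt hp₀T''⟩
        rw [frontier, hΩo.interior_eq]
        exact ⟨hp₀x, hxo⟩
    have h2 : u p₀.1 p₀.2 ≤ v p₀ := by
      have hvp : v p₀ = u p₀.1 p₀.2 + ε * (T'' - p₀.2)⁻¹ := rfl
      have hpos : 0 < ε * (T'' - p₀.2)⁻¹ :=
        mul_pos hε (inv_pos.mpr (sub_pos.mpr hp₀T''))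
      rw [hvp]; linarith
    have h3 := hm p₀ hbd
    rw [hvx₁eq] at hvx₁
    have h4 : m ≤ u x₁ t₁ + ε * (T'' - t₁)⁻¹ := le_trans h3 (le_trans h2 hvx₁)
    linarith

end Aux

/-- sup_{Ω_T} |u| ≤ sup_{∂_par Ω_T} |g| for every parabolic viscosity
h-infinite solution with boundary data g. -/
theorem statement7
    (n : ℕ) (h : ℝ) (hh : 1 ≤ h) (Ω : Set (Euc n)) (hΩo : IsOpen Ω)
    (hΩb : Bornology.IsBounded Ω) (T : ℝ) (hT : 0 < T)
    (g u : Euc n → ℝ → ℝ)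
    (hg : ContinuousOn (fun p : Euc n × ℝ => g p.1 p.2) (closure Ω ×ˢ Set.Ico 0 T))
    (huc : ContinuousOn (fun p : Euc n × ℝ => u p.1 p.2) (closure Ω ×ˢ Set.Ico 0 T))
    (hsol : IsParaSub h (Ω ×ˢ Set.Ioo 0 T) u ∧ IsParaSuper h (Ω ×ˢ Set.Ioo 0 T) u)
    (hb : ∀ p : Euc n × ℝ,
      p ∈ (closure Ω ×ˢ ({0} : Set ℝ)) ∪ (frontier Ω ×ˢ Set.Ioo 0 T) →
      u p.1 p.2 = g p.1 p.2) :
    (⨆ p ∈ Ω ×ˢ Set.Ioo 0 T, ((|u p.1 p.2| : ℝ) : EReal)) ≤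
      ⨆ p ∈ (closure Ω ×ˢ ({0} : Set ℝ)) ∪ (frontier Ω ×ˢ Set.Ioo 0 T),
        ((|g p.1 p.2| : ℝ) : EReal) := by
  
  obtain ⟨hsub, hsuper⟩ := hsol
  refine iSup₂_le ?_
  rintro ⟨x₁, t₁⟩ hp
  obtain ⟨hx₁, ht₁⟩ : x₁ ∈ Ω ∧ t₁ ∈ Set.Ioo 0 T := hp
  set T'' := (t₁ + T) / 2 with hT''def
  have hT1 : t₁ < T'' := by rw [hT''def]; linarith [ht₁.2]
  have hT2 : T'' < T := by rw [hT''def]; linarith [ht₁.2]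
  have hcΩ : IsCompact (closure Ω) := hΩb.isCompact_closure
  set Bc := (closure Ω ×ˢ ({0} : Set ℝ)) ∪ (frontier Ω ×ˢ Set.Icc 0 T'') with hBcdef
  have hBcB : Bc ⊆ (closure Ω ×ˢ ({0} : Set ℝ)) ∪ (frontier Ω ×ˢ Set.Ioo 0 T) := by
    rintro ⟨x, t⟩ (⟨hx, ht⟩ | ⟨hx, ht0, htT⟩)
    · exact Or.inl ⟨hx, ht⟩
    · rcases eq_or_lt_of_le ht0 with he | hlt
      · exact Or.inl ⟨frontier_subset_closure hx, he.symm⟩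
      · exact Or.inr ⟨hx, hlt, lt_of_le_of_lt htT hT2⟩
  have hBcIco : Bc ⊆ closure Ω ×ˢ Set.Ico 0 T := by
    rintro ⟨x, t⟩ (⟨hx, ht⟩ | ⟨hx, ht0, htT⟩)
    · have ht' : t = 0 := ht
      exact ⟨hx, by rw [ht']; exact ⟨le_refl 0, hT⟩⟩
    · exact ⟨frontier_subset_closure hx, ht0, lt_of_le_of_lt htT hT2⟩
  have hfrc : IsCompact (frontier Ω) :=
    hcΩ.of_isClosed_subset isClosed_frontier frontier_subset_closure
  have hBcc : IsCompact Bc :=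
    (hcΩ.prod isCompact_singleton).union (hfrc.prod isCompact_Icc)
  have hBcne : Bc.Nonempty := ⟨(x₁, 0), Or.inl ⟨subset_closure hx₁, rfl⟩⟩
  have habs : ContinuousOn (fun p : Euc n × ℝ => |u p.1 p.2|) Bc := (huc.mono hBcIco).abs
  obtain ⟨qs, hqsBc, hqsmax⟩ := hBcc.exists_isMaxOn hBcne habs
  set M := |u qs.1 qs.2| with hMdef
  have hM : ∀ q : Euc n × ℝ, q ∈ Bc → u q.1 q.2 ≤ M :=
    fun q hq => le_trans (le_abs_self _) (isMaxOn_iff.mp hqsmax q hq)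
  have hm : ∀ q : Euc n × ℝ, q ∈ Bc → -M ≤ u q.1 q.2 := fun q hq => by
    have h1 : |u q.1 q.2| ≤ M := isMaxOn_iff.mp hqsmax q hq
    have h2 := neg_abs_le (u q.1 q.2)
    linarith
  have hup : u x₁ t₁ ≤ M := by
    refine le_of_forall_pos_le_add fun ε hε => ?_
    have hεc : 0 < ε * (T'' - t₁) := mul_pos hε (sub_pos.mpr hT1)
    have hkey := core_sub hh hΩo hcΩ huc hsub hx₁ ht₁ hT1 hT2 hM hεc
    calc u x₁ t₁ ≤ M + ε * (T'' - t₁) * (T'' - t₁)⁻¹ := hkey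
      _ = M + ε := by
          rw [mul_assoc, mul_inv_cancel₀ (ne_of_gt (sub_pos.mpr hT1)), mul_one]
  have hlo : -M ≤ u x₁ t₁ := by
    have hforall : ∀ ε : ℝ, 0 < ε → -M ≤ u x₁ t₁ + ε := by
      intro ε hε
      have hεc : 0 < ε * (T'' - t₁) := mul_pos hε (sub_pos.mpr hT1)
      have hkey := core_super hh hΩo hcΩ huc hsuper hx₁ ht₁ hT1 hT2 hm hεc
      have heq : ε * (T'' - t₁) * (T'' - t₁)⁻¹ = ε := by
        rw [mul_assoc, mul_inv_cancel₀ (ne_of_gt (sub_pos.mpr hT1)), mul_one]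
      rw [heq] at hkey
      linarith
    exact le_of_forall_pos_le_add hforall
  have habsle : |u x₁ t₁| ≤ |g qs.1 qs.2| := by
    have := hb qs (hBcB hqsBc)
    rw [← this, ← hMdef]
    exact abs_le.mpr ⟨hlo, hup⟩
  calc ((|u x₁ t₁| : ℝ) : EReal) ≤ ((|g qs.1 qs.2| : ℝ) : EReal) :=
        EReal.coe_le_coe_iff.mpr habsle
    _ ≤ ⨆ p ∈ (closure Ω ×ˢ ({0} : Set ℝ)) ∪ (frontier Ω ×ˢ Set.Ioo 0 T),
          ((|g p.1 p.2| : ℝ) : EReal) :=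
        le_iSup₂ (f := fun (p : Euc n × ℝ)
          (_ : p ∈ (closure Ω ×ˢ ({0} : Set ℝ)) ∪ (frontier Ω ×ˢ Set.Ioo 0 T)) =>
          ((|g p.1 p.2| : ℝ) : EReal)) qs (hBcB hqsBc)
end
end
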